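/- arXiv:2204.02516 — 6 statements merged into one kernel-verified Lean document; each statement's English description precedes it below -/
import Mathlib

section
/- For linear maps φ : M_a → M_b and ψ : M_b → M_a, the identity C_{ψ ∘ φ*} = (φ ⊗ ψ)(C_{id_a}) holds, where C_{id_a} = Σ_{i,j} E_{ij} ⊗ E_{ij} is the Choi matrix of the identity map. -/
open Matrix Kronecker BigOperators

noncomputable def choi {a b : ℕ}
    (φ : Matrix (Fin a) (Fin a) ℂ →ₗ[ℂ] Matrix (Fin b) (Fin b) ℂ) :
    Matrix (Fin a × Fin b) (Fin a × Fin b) ℂ :=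
  ∑ i : Fin a, ∑ j : Fin a,
    (Matrix.single i j (1 : ℂ)) ⊗ₖ φ (Matrix.single i j (1 : ℂ))

noncomputable def tensorMap {a₁ b₁ a₂ b₂ : ℕ}
    (φ₁ : Matrix (Fin a₁) (Fin a₁) ℂ →ₗ[ℂ] Matrix (Fin b₁) (Fin b₁) ℂ)
    (φ₂ : Matrix (Fin a₂) (Fin a₂) ℂ →ₗ[ℂ] Matrix (Fin b₂) (Fin b₂) ℂ)
    (M : Matrix (Fin a₁ × Fin a₂) (Fin a₁ × Fin a₂) ℂ) :
    Matrix (Fin b₁ × Fin b₂) (Fin b₁ × Fin b₂) ℂ :=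
  ∑ i : Fin a₁, ∑ j : Fin a₁,
    (φ₁ (Matrix.single i j (1 : ℂ))) ⊗ₖ
      (φ₂ (Matrix.of fun k l => M (i, k) (j, l)))

noncomputable def adS {a b : ℕ} (s : Matrix (Fin a) (Fin b) ℂ) :
    Matrix (Fin a) (Fin a) ℂ →ₗ[ℂ] Matrix (Fin b) (Fin b) ℂ where
  toFun x := sᴴ * x * s
  map_add' x y := by simp [Matrix.mul_add, Matrix.add_mul]
  map_smul' c x := by simp [Matrix.mul_smul, Matrix.smul_mul]

noncomputable def pairM {n : Type*} [Fintype n] (x y : Matrix n n ℂ) : ℂ := (x * yᵀ).trace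


lemma pair_std {n : Type*} [Fintype n] [DecidableEq n] (x : Matrix n n ℂ) (i j : n) :
    pairM x (Matrix.single i j 1) = x i j := by
  simp [pairM, Matrix.trace, Matrix.mul_apply, Matrix.single, Matrix.diag,
    ite_and, Finset.sum_ite_eq, Finset.sum_ite_eq', mul_ite]

lemma std_pair {n : Type*} [Fintype n] [DecidableEq n] (y : Matrix n n ℂ) (i j : n) :
    pairM (Matrix.single i j 1) y = y i j := by
  simp [pairM, Matrix.trace, Matrix.mul_apply, Matrix.single, Matrix.diag,
    ite_and, Finset.sum_ite_eq, Finset.sum_ite_eq', mul_ite]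

/-- `C_{ψ ∘ φ*} = (φ ⊗ ψ)(C_{id_a})`. -/
theorem stmt_2 {a b : ℕ}
    (φ ψ : Matrix (Fin a) (Fin a) ℂ →ₗ[ℂ] Matrix (Fin b) (Fin b) ℂ)
    (φd : Matrix (Fin b) (Fin b) ℂ →ₗ[ℂ] Matrix (Fin a) (Fin a) ℂ)
    (hdual : ∀ (y : Matrix (Fin b) (Fin b) ℂ) (x : Matrix (Fin a) (Fin a) ℂ),
      pairM (φd y) x = pairM y (φ x)) :
    choi (ψ ∘ₗ φd) = tensorMap φ ψ (choi (LinearMap.id)) := by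
  have hφd : ∀ m n : Fin b, φd (Matrix.single m n 1) =
      ∑ i : Fin a, ∑ j : Fin a,
        φ (Matrix.single i j 1) m n • Matrix.single i j (1 : ℂ) := by
    intro m n
    ext i j
    have h := hdual (Matrix.single m n 1) (Matrix.single i j 1)
    rw [pair_std, std_pair] at h
    rw [h]
    simp [Matrix.sum_apply, Matrix.smul_apply, Matrix.single,
      ite_and, Finset.sum_ite_eq, Finset.sum_ite_eq', mul_ite]
  have hid : ∀ i j : Fin a,
      (Matrix.of fun k l => choi (LinearMap.id (R := ℂ) (M := Matrix (Fin a) (Fin a) ℂ)) (i, k) (j, l))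
        = Matrix.single i j (1 : ℂ) := by
    intro i j
    ext k l
    simp [choi, Matrix.sum_apply, Matrix.kroneckerMap_apply, Matrix.single,
      ite_and, Finset.sum_ite_eq, Finset.sum_ite_eq', eq_comm]
  ext ⟨m, k⟩ ⟨n, l⟩
  have hL : choi (ψ ∘ₗ φd) (m, k) (n, l) = ψ (φd (Matrix.single m n 1)) k l := by
    simp [choi, Matrix.sum_apply, Matrix.kroneckerMap_apply, Matrix.single,
      ite_and, Finset.sum_ite_eq, Finset.sum_ite_eq']
  rw [hL, hφd]
  simp only [map_sum, LinearMap.map_smul, tensorMap, Matrix.sum_apply, Matrix.smul_apply,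
    Matrix.kroneckerMap_apply, smul_eq_mul]
  refine Finset.sum_congr rfl fun i _ => Finset.sum_congr rfl fun j _ => ?_
  rw [hid i j]
end

section
/- A linear map φ : M_a → M_b is completely positive (i.e., id_k ⊗ φ is positive for all k) if and only if its Choi matrix C_φ is positive semidefinite. -/
open Matrix Kronecker BigOperators
open scoped ComplexOrder

lemma choi_apply {a b : ℕ}
    (φ : Matrix (Fin a) (Fin a) ℂ →ₗ[ℂ] Matrix (Fin b) (Fin b) ℂ)
    (i j : Fin a) (k l : Fin b) :
    choi φ (i, k) (j, l) = φ (Matrix.single i j 1) k l := by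
  simp only [choi, Matrix.sum_apply, kroneckerMap_apply, Matrix.single, Matrix.of_apply]
  rw [Finset.sum_eq_single i, Finset.sum_eq_single j] <;>
    simp +contextual [eq_comm]

lemma sum_swap4 {i1 i2 i3 i4 : Type*} [Fintype i1] [Fintype i2] [Fintype i3] [Fintype i4]
    {M : Type*} [AddCommMonoid M] (f : i1 → i2 → i3 → i4 → M) :
    ∑ i, ∑ j, ∑ m, ∑ n, f i j m n = ∑ m, ∑ n, ∑ i, ∑ j, f i j m n := by
  calc ∑ i, ∑ j, ∑ m, ∑ n, f i j m n
      = ∑ i, ∑ m, ∑ j, ∑ n, f i j m n :=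
        Finset.sum_congr rfl fun i _ => Finset.sum_comm
    _ = ∑ m, ∑ i, ∑ j, ∑ n, f i j m n := Finset.sum_comm
    _ = ∑ m, ∑ i, ∑ n, ∑ j, f i j m n :=
        Finset.sum_congr rfl fun m _ => Finset.sum_congr rfl fun i _ => Finset.sum_comm
    _ = ∑ m, ∑ n, ∑ i, ∑ j, f i j m n :=
        Finset.sum_congr rfl fun m _ => Finset.sum_comm

lemma tensorMap_id_apply {a b k : ℕ}
    (φ : Matrix (Fin a) (Fin a) ℂ →ₗ[ℂ] Matrix (Fin b) (Fin b) ℂ)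
    (ρ : Matrix (Fin k × Fin a) (Fin k × Fin a) ℂ)
    (p q : Fin k) (r s : Fin b) :
    (tensorMap (LinearMap.id : Matrix (Fin k) (Fin k) ℂ →ₗ[ℂ] Matrix (Fin k) (Fin k) ℂ)
      φ ρ) (p, r) (q, s)
      = ∑ i : Fin a, ∑ j : Fin a,
          ρ (p, i) (q, j) * φ (Matrix.single i j 1) r s := by
  simp only [tensorMap, Matrix.sum_apply, kroneckerMap_apply, LinearMap.id_apply]
  rw [Finset.sum_eq_single p]
  rotate_left
  · intro i _ hi
    apply Finset.sum_eq_zero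
    intro j _
    simp [Matrix.single, hi]
  · simp
  rw [Finset.sum_eq_single q]
  rotate_left
  · intro j _ hj
    simp [Matrix.single, hj]
  · simp
  have : (Matrix.of fun k' l' => ρ (p, k') (q, l'))
      = ∑ i : Fin a, ∑ j : Fin a, ρ (p, i) (q, j) • Matrix.single i j (1 : ℂ) := by
    conv_lhs => rw [Matrix.matrix_eq_sum_single (Matrix.of fun k' l' => ρ (p, k') (q, l'))]
    simp [Matrix.smul_single]
  rw [this]
  simp only [map_sum, _root_.map_smul, Matrix.sum_apply, Matrix.smul_apply, smul_eq_mul,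
    Matrix.single_apply_same, one_mul]

/-- A linear map is completely positive iff its Choi matrix is positive semidefinite. -/
theorem stmt_9 {a b : ℕ}
    (φ : Matrix (Fin a) (Fin a) ℂ →ₗ[ℂ] Matrix (Fin b) (Fin b) ℂ) :
    (∀ (k : ℕ) (ρ : Matrix (Fin k × Fin a) (Fin k × Fin a) ℂ), ρ.PosSemidef →
      (tensorMap (LinearMap.id : Matrix (Fin k) (Fin k) ℂ →ₗ[ℂ] Matrix (Fin k) (Fin k) ℂ)
        φ ρ).PosSemidef) ↔
    (choi φ).PosSemidef := by
  constructor
  · intro H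
    set B : Matrix (Fin 1) (Fin a × Fin a) ℂ :=
      Matrix.of (fun _ pi => if pi.1 = pi.2 then 1 else 0) with hB
    have hΩ : (Bᴴ * B).PosSemidef := Matrix.posSemidef_conjTranspose_mul_self B
    have := H a (Bᴴ * B) hΩ
    have hEq : tensorMap (LinearMap.id : Matrix (Fin a) (Fin a) ℂ →ₗ[ℂ] Matrix (Fin a) (Fin a) ℂ)
        φ (Bᴴ * B) = choi φ := by
      ext ⟨p, r⟩ ⟨q, s⟩
      rw [tensorMap_id_apply, choi_apply]
      have hentry : ∀ (i j : Fin a), (Bᴴ * B) (p, i) (q, j)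
          = (if p = i then (1:ℂ) else 0) * (if q = j then 1 else 0) := by
        intro i j
        simp [Matrix.mul_apply, hB, Matrix.conjTranspose_apply, apply_ite (star : ℂ → ℂ)]
      simp only [hentry]
      rw [Finset.sum_eq_single p]
      rotate_left
      · intro i _ hi
        apply Finset.sum_eq_zero
        intro j _
        simp [Ne.symm hi]
      · simp
      rw [Finset.sum_eq_single q] <;> simp +contextual [eq_comm]
    rw [← hEq]
    exact this
  · intro hC k ρ hρ
    obtain ⟨A, hA⟩ := (show ∃ B, ρ = Bᴴ * B by
      open scoped MatrixOrder Matrix.Norms.L2Operator in exact CStarAlgebra.nonneg_iff_eq_star_mul_self.mp hρ.nonneg)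
    obtain ⟨Bm, hBm⟩ := (show ∃ B, choi φ = Bᴴ * B by
      open scoped MatrixOrder Matrix.Norms.L2Operator in exact CStarAlgebra.nonneg_iff_eq_star_mul_self.mp hC.nonneg)
    set G : Matrix ((Fin k × Fin a) × (Fin a × Fin b)) (Fin k × Fin b) ℂ :=
      Matrix.of (fun mn pr => ∑ i : Fin a, A mn.1 (pr.1, i) * Bm mn.2 (i, pr.2)) with hG
    have key : tensorMap (LinearMap.id : Matrix (Fin k) (Fin k) ℂ →ₗ[ℂ] Matrix (Fin k) (Fin k) ℂ)
        φ ρ = Gᴴ * G := by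
      ext ⟨p, r⟩ ⟨q, s⟩
      rw [tensorMap_id_apply]
      have hρe : ∀ (i j : Fin a), ρ (p, i) (q, j)
          = ∑ m : Fin k × Fin a, star (A m (p, i)) * A m (q, j) := by
        intro i j
        rw [hA]
        simp [Matrix.mul_apply, Matrix.conjTranspose_apply]
      have hCe : ∀ (i j : Fin a), φ (Matrix.single i j 1) r s
          = ∑ n : Fin a × Fin b, star (Bm n (i, r)) * Bm n (j, s) := by
        intro i j
        rw [← choi_apply, hBm]
        simp [Matrix.mul_apply, Matrix.conjTranspose_apply]
      have L : ∑ i : Fin a, ∑ j : Fin a, ρ (p, i) (q, j) * φ (Matrix.single i j 1) r s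
          = ∑ i : Fin a, ∑ j : Fin a, ∑ n : Fin a × Fin b, ∑ m : Fin k × Fin a,
              star (A m (p, i)) * A m (q, j) * (star (Bm n (i, r)) * Bm n (j, s)) := by
        simp only [hρe, hCe, Finset.sum_mul, Finset.mul_sum]
      have R : (Gᴴ * G) (p, r) (q, s)
          = ∑ m : Fin k × Fin a, ∑ n : Fin a × Fin b, ∑ i : Fin a, ∑ j : Fin a,
              star (A m (p, i)) * A m (q, j) * (star (Bm n (i, r)) * Bm n (j, s)) := by
        simp only [Matrix.mul_apply, Matrix.conjTranspose_apply, hG, Matrix.of_apply]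
        rw [Fintype.sum_prod_type]
        refine Finset.sum_congr rfl fun m _ => Finset.sum_congr rfl fun n _ => ?_
        simp only [star_sum, star_mul', Finset.sum_mul, Finset.mul_sum]
        rw [Finset.sum_comm]
        refine Finset.sum_congr rfl fun i _ => Finset.sum_congr rfl fun j _ => ?_
        ring
      rw [L, R, sum_swap4]
      exact Finset.sum_comm
    rw [key]
    exact Matrix.posSemidef_conjTranspose_mul_self G
end

section
/- If the Choi matrix C_φ of a linear map φ : M_a → M_b is positive semidefinite, then φ admits a Kraus decomposition: φ(x) = Σ_i s_i* x s_i for finitely many matrices s_i ∈ M_{a,b}. -/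
open Matrix Kronecker BigOperators
open scoped ComplexOrder

open scoped MatrixOrder in
lemma psd_exists_eq_conjTranspose_mul_self {n : Type*} [Fintype n] [DecidableEq n]
    {A : Matrix n n ℂ} (hA : A.PosSemidef) : ∃ B : Matrix n n ℂ, A = Bᴴ * B := by
  obtain ⟨B, rfl⟩ := CStarAlgebra.nonneg_iff_eq_star_mul_self.mp hA.nonneg
  exact ⟨B, rfl⟩

/-- If the Choi matrix of `φ` is positive semidefinite, then `φ` has a Kraus
decomposition `φ(x) = ∑ i, sᵢ* x sᵢ`. -/
theorem stmt_10 {a b : ℕ}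
    (φ : Matrix (Fin a) (Fin a) ℂ →ₗ[ℂ] Matrix (Fin b) (Fin b) ℂ)
    (h : (choi φ).PosSemidef) :
    ∃ (n : ℕ) (s : Fin n → Matrix (Fin a) (Fin b) ℂ),
      ∀ x : Matrix (Fin a) (Fin a) ℂ, φ x = ∑ i : Fin n, (s i)ᴴ * x * s i := by
  obtain ⟨B, hB⟩ := psd_exists_eq_conjTranspose_mul_self h
  refine ⟨a * b, fun m => Matrix.of fun i k => B (finProdFinEquiv.symm m) (i, k), fun x => ?_⟩
  ext k l
  have hx : φ x = ∑ i : Fin a, ∑ j : Fin a, x i j • φ (Matrix.single i j 1) := by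
    conv_lhs => rw [Matrix.matrix_eq_sum_single x]
    simp only [map_sum]
    refine Finset.sum_congr rfl fun i _ => Finset.sum_congr rfl fun j _ => ?_
    rw [← _root_.map_smul, Matrix.smul_single, smul_eq_mul, mul_one]
  have hC : ∀ (i j : Fin a), φ (Matrix.single i j 1) k l
      = ∑ m : Fin a × Fin b, (starRingEnd ℂ) (B m (i, k)) * B m (j, l) := by
    intro i j
    rw [← choi_apply, hB, Matrix.mul_apply]
    simp [Matrix.conjTranspose_apply]
  rw [hx]
  simp only [Matrix.sum_apply, Matrix.smul_apply, smul_eq_mul, hC]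
  rw [Equiv.sum_comp (finProdFinEquiv (m := a) (n := b)).symm
    (fun m => ((Matrix.of fun i k => B m (i, k))ᴴ * x * (Matrix.of fun i k => B m (i, k))) k l)]
  simp only [Matrix.mul_apply, Matrix.conjTranspose_apply, Matrix.of_apply,
    Finset.mul_sum, Finset.sum_mul]
  conv_lhs => enter [2, i]; rw [Finset.sum_comm]
  conv_lhs => rw [Finset.sum_comm]
  conv_rhs => enter [2, m]; rw [Finset.sum_comm]
  refine Finset.sum_congr rfl fun m _ => Finset.sum_congr rfl fun i _ => Finset.sum_congr rfl fun j _ => ?_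
  simp only [starRingEnd_apply]; ring
end

section
/- If s = |ξ⟩⟨η| ∈ M_{a,b} is a rank-one matrix, then Ad_s(x) = ⟨ξ| x |ξ⟩ · |η⟩⟨η| for all x ∈ M_a; consequently every 1-superpositive map φ (a nonnegative sum of Ad_{s_i} with rank s_i ≤ 1) has a Holevo form φ(x) = Σ_k Tr(x v_kᵗ) u_k with u_k, v_k positive semidefinite. -/
open Matrix Kronecker BigOperators
open scoped ComplexOrder

/-- Rank-one factorization. -/
lemma aux_rank_factor {a b : ℕ} (s : Matrix (Fin a) (Fin b) ℂ) (h : s.rank ≤ 1) :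
    ∃ (ξ : Fin a → ℂ) (η : Fin b → ℂ),
      s = Matrix.of fun i j => ξ i * (starRingEnd ℂ) (η j) := by
  have hr : Module.rank ℂ (LinearMap.range s.mulVecLin) ≤ 1 := by
    rw [← Module.finrank_eq_rank]
    exact_mod_cast h
  obtain ⟨v₀, hv₀⟩ := rank_le_one_iff.mp hr
  have hcol : ∀ j, ∃ r : ℂ, ∀ i, r * (v₀ : Fin a → ℂ) i = s i j := by
    intro j
    obtain ⟨r, hr'⟩ := hv₀ ⟨s.mulVecLin (Pi.single j 1), LinearMap.mem_range_self _ _⟩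
    refine ⟨r, fun i => ?_⟩
    have h2 := congrFun (congrArg Subtype.val hr') i
    simpa using h2
  choose r hrr using hcol
  refine ⟨fun i => (v₀ : Fin a → ℂ) i, fun j => (starRingEnd ℂ) (r j), ?_⟩
  ext i j
  simp [← hrr j i, mul_comm]

lemma aux_outer_psd {n : ℕ} (w : Fin n → ℂ) :
    (Matrix.of fun p q : Fin n => w p * (starRingEnd ℂ) (w q)).PosSemidef := by
  rw [Matrix.posSemidef_iff_dotProduct_mulVec]
  constructor
  · ext p q
    simp [Matrix.conjTranspose_apply, mul_comm]
  · intro y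
    have : (star y) ⬝ᵥ ((Matrix.of fun p q : Fin n => w p * (starRingEnd ℂ) (w q)) *ᵥ y)
        = (∑ p, star (y p) * w p) * star (∑ p, star (y p) * w p) := by
      simp only [dotProduct, Matrix.mulVec, dotProduct, Matrix.of_apply, Pi.star_apply,
        Finset.mul_sum, Finset.sum_mul, star_sum, star_mul', star_star, RingHom.coe_comp]
      rw [Finset.sum_comm]
      refine Finset.sum_congr rfl fun p _ => Finset.sum_congr rfl fun q _ => ?_
      simp only [Complex.star_def]
      ring
    rw [this]
    exact mul_star_self_nonneg _

lemma aux_adS_rank_one {a b : ℕ} (ξ : Fin a → ℂ) (η : Fin b → ℂ)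
    (x : Matrix (Fin a) (Fin a) ℂ) :
    adS (Matrix.of fun i j => ξ i * (starRingEnd ℂ) (η j)) x =
      (∑ i : Fin a, ∑ j : Fin a, (starRingEnd ℂ) (ξ i) * x i j * ξ j) •
        Matrix.of fun p q : Fin b => η p * (starRingEnd ℂ) (η q) := by
  ext p q
  show ((Matrix.of fun i j => ξ i * (starRingEnd ℂ) (η j))ᴴ * x *
      (Matrix.of fun i j => ξ i * (starRingEnd ℂ) (η j))) p q = _
  simp only [Matrix.mul_apply, Matrix.conjTranspose_apply, Matrix.of_apply,
    Matrix.smul_apply, smul_eq_mul, star_mul', star_star, Complex.star_def,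
    Finset.sum_mul, Finset.mul_sum, Complex.conj_conj]
  rw [Finset.sum_comm]
  refine Finset.sum_congr rfl fun i _ => Finset.sum_congr rfl fun j _ => ?_
  ring

/-- For a rank-one matrix `s = |ξ⟩⟨η|` one has `Ad_s(x) = ⟨ξ|x|ξ⟩ |η⟩⟨η|`;
consequently every 1-superpositive map has a Holevo form
`φ(x) = ∑ₖ Tr(x vₖᵗ) uₖ` with `uₖ, vₖ` positive semidefinite. -/
theorem stmt_16 {a b : ℕ} :
    (∀ (ξ : Fin a → ℂ) (η : Fin b → ℂ) (x : Matrix (Fin a) (Fin a) ℂ),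
      adS (Matrix.of fun i j => ξ i * (starRingEnd ℂ) (η j)) x =
        (∑ i : Fin a, ∑ j : Fin a, (starRingEnd ℂ) (ξ i) * x i j * ξ j) •
          Matrix.of fun p q : Fin b => η p * (starRingEnd ℂ) (η q)) ∧
    (∀ (φ : Matrix (Fin a) (Fin a) ℂ →ₗ[ℂ] Matrix (Fin b) (Fin b) ℂ),
      (∃ (n : ℕ) (c : Fin n → ℝ) (s : Fin n → Matrix (Fin a) (Fin b) ℂ),
        (∀ i, 0 ≤ c i) ∧ (∀ i, (s i).rank ≤ 1) ∧
        ∀ x, φ x = ∑ i : Fin n, (c i : ℂ) • adS (s i) x) →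
      ∃ (m : ℕ) (u : Fin m → Matrix (Fin b) (Fin b) ℂ)
        (v : Fin m → Matrix (Fin a) (Fin a) ℂ),
        (∀ k, (u k).PosSemidef) ∧ (∀ k, (v k).PosSemidef) ∧
        ∀ x, φ x = ∑ k : Fin m, (x * (v k)ᵀ).trace • u k) := by
  refine ⟨aux_adS_rank_one, ?_⟩
  rintro φ ⟨n, c, s, hc, hrank, hφ⟩
  choose ξ η hfac using fun k => aux_rank_factor (s k) (hrank k)
  refine ⟨n, fun k => (c k : ℂ) • Matrix.of fun p q => η k p * (starRingEnd ℂ) (η k q),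
    fun k => Matrix.of fun i j => (starRingEnd ℂ) (ξ k i) * ξ k j, ?_, ?_, ?_⟩
  · intro k
    have h := aux_outer_psd (η k)
    rw [Matrix.posSemidef_iff_dotProduct_mulVec]
    constructor
    · rw [Matrix.IsHermitian, Matrix.conjTranspose_smul, h.1.eq, Complex.star_def,
        Complex.conj_ofReal]
    · intro y
      rw [Matrix.smul_mulVec, dotProduct_smul, smul_eq_mul]
      exact mul_nonneg (by exact_mod_cast hc k) (h.dotProduct_mulVec_nonneg y)
  · intro k
    have h := aux_outer_psd (fun i => (starRingEnd ℂ) (ξ k i))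
    convert h using 2
    ext i j
    simp
  · intro x
    rw [hφ x]
    refine Finset.sum_congr rfl fun k _ => ?_
    rw [hfac k, aux_adS_rank_one]
    have htr : (x * (Matrix.of fun i j => (starRingEnd ℂ) (ξ k i) * ξ k j)ᵀ).trace
        = ∑ i : Fin a, ∑ j : Fin a, (starRingEnd ℂ) (ξ k i) * x i j * ξ k j := by
      simp only [Matrix.trace, Matrix.diag_apply, Matrix.mul_apply, Matrix.transpose_apply,
        Matrix.of_apply]
      refine Finset.sum_congr rfl fun i _ => Finset.sum_congr rfl fun j _ => ?_
      ring
    rw [htr, smul_comm]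
end

section
/- The Tomiyama–Choi map φ_λ : M_n → M_n defined by φ_λ(x) = λ·Tr(x)·I_n − x is positive (sends positive semidefinite matrices to positive semidefinite matrices) if and only if λ ≥ 1. -/
open Matrix Kronecker BigOperators
open scoped ComplexOrder

/-- The Tomiyama–Choi map `φ_λ(x) = λ Tr(x) I − x` is positive iff `λ ≥ 1`. -/
theorem stmt_17 {n : ℕ} (hn : 0 < n) (lam : ℝ) :
    (∀ x : Matrix (Fin n) (Fin n) ℂ, x.PosSemidef →
      ((lam : ℂ) • x.trace • (1 : Matrix (Fin n) (Fin n) ℂ) - x).PosSemidef) ↔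
    1 ≤ lam := by
  constructor
  · intro h
    set i0 : Fin n := ⟨0, hn⟩
    set x : Matrix (Fin n) (Fin n) ℂ := Matrix.diagonal (Pi.single i0 1) with hx
    have hxps : x.PosSemidef := by
      refine Matrix.posSemidef_diagonal_iff.mpr fun i => ?_
      by_cases hi : i = i0 <;> simp [hi, Pi.single_apply]
    have htr : x.trace = 1 := by
      simp [hx, Matrix.trace_diagonal]
    have := (h x hxps).dotProduct_mulVec_nonneg (Pi.single i0 1)
    have hval : star (Pi.single i0 1 : Fin n → ℂ) ⬝ᵥ
        (((lam : ℂ) • x.trace • (1 : Matrix (Fin n) (Fin n) ℂ) - x) *ᵥ Pi.single i0 1)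
        = (lam : ℂ) - 1 := by
      simp [htr, hx, Matrix.sub_mulVec, Matrix.mulVec_single, dotProduct,
        Pi.single_apply, Matrix.diagonal_apply]
    rw [hval] at this
    have : (1 : ℂ) ≤ (lam : ℂ) := by
      rwa [sub_nonneg] at this
    exact_mod_cast this
  · intro hlam x hx
    have hH := hx.isHermitian
    set U : Matrix (Fin n) (Fin n) ℂ := (hH.eigenvectorUnitary : Matrix (Fin n) (Fin n) ℂ) with hUdef
    set D : Matrix (Fin n) (Fin n) ℂ := Matrix.diagonal (RCLike.ofReal ∘ hH.eigenvalues) with hDdef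
    have hU : U * star U = 1 := (Matrix.mem_unitaryGroup_iff).mp hH.eigenvectorUnitary.2
    have hU' : star U * U = 1 := (Matrix.mem_unitaryGroup_iff').mp hH.eigenvectorUnitary.2
    have hspec : x = U * D * star U := hH.spectral_theorem
    set c : ℝ := ∑ i, hH.eigenvalues i with hc
    have htr : x.trace = (c : ℂ) := by
      rw [hspec, Matrix.trace_mul_cycle, hU', one_mul, hDdef, Matrix.trace_diagonal]
      simp [hc]
    have hc0 : 0 ≤ c := Finset.sum_nonneg fun j _ => hx.eigenvalues_nonneg j
    have hD : Matrix.diagonal (fun i => ((lam * c - hH.eigenvalues i : ℝ) : ℂ))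
        = ((lam * c : ℝ) : ℂ) • (1 : Matrix (Fin n) (Fin n) ℂ) - D := by
      ext i j
      by_cases hij : i = j
      · simp only [hij, hDdef, Matrix.diagonal_apply_eq, Matrix.sub_apply,
          Matrix.smul_apply, Matrix.one_apply_eq, Function.comp_apply, smul_eq_mul, mul_one]
        push_cast
        norm_num
      · simp [hij, hDdef, Matrix.diagonal_apply, Matrix.one_apply]
    have key : (lam : ℂ) • x.trace • (1 : Matrix (Fin n) (Fin n) ℂ) - x
        = U * Matrix.diagonal (fun i => ((lam * c - hH.eigenvalues i : ℝ) : ℂ)) * star U := by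
      rw [hD, Matrix.mul_sub, Matrix.sub_mul, Matrix.mul_smul, Matrix.smul_mul, mul_one, hU,
        ← hspec, htr, smul_smul]
      congr 1
      push_cast
      ring_nf
    rw [key, Matrix.star_eq_conjTranspose]
    apply Matrix.PosSemidef.mul_mul_conjTranspose_same
    refine Matrix.posSemidef_diagonal_iff.mpr fun i => ?_
    have h1 : hH.eigenvalues i ≤ c :=
      Finset.single_le_sum (fun j _ => hx.eigenvalues_nonneg j) (Finset.mem_univ i)
    have h2 : c ≤ lam * c := le_mul_of_one_le_left hc0 hlam
    have : (0 : ℝ) ≤ lam * c - hH.eigenvalues i := by linarith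
    exact_mod_cast this
end

section
/- The Tomiyama–Choi map φ_λ : M_n → M_n, φ_λ(x) = λ·Tr(x)·I_n − x, is completely positive if and only if λ ≥ n. -/
open Matrix Kronecker BigOperators
open scoped ComplexOrder

/-- The Tomiyama–Choi map `φ_λ(x) = λ Tr(x) I − x` as a linear map. -/
noncomputable def tomiyamaChoi (n : ℕ) (lam : ℝ) :
    Matrix (Fin n) (Fin n) ℂ →ₗ[ℂ] Matrix (Fin n) (Fin n) ℂ where
  toFun x := (lam : ℂ) • x.trace • (1 : Matrix (Fin n) (Fin n) ℂ) - x
  map_add' x y := by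
    simp [Matrix.trace_add, add_smul, smul_add]
    abel
  map_smul' c x := by
    simp only [Matrix.trace_smul, smul_smul, smul_sub, RingHom.id_apply,
      smul_eq_mul]
    ring_nf

lemma tm_entry {k n : ℕ} (lam : ℝ) (ρ : Matrix (Fin k × Fin n) (Fin k × Fin n) ℂ)
    (a c : Fin k) (b d : Fin n) :
    tensorMap (LinearMap.id : Matrix (Fin k) (Fin k) ℂ →ₗ[ℂ] Matrix (Fin k) (Fin k) ℂ)
        (tomiyamaChoi n lam) ρ (a, b) (c, d)
      = (lam : ℂ) * (∑ m, ρ (a, m) (c, m)) * (if b = d then 1 else 0) - ρ (a, b) (c, d) := by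
  unfold tensorMap tomiyamaChoi
  simp only [LinearMap.id_coe, id_eq, Matrix.sum_apply, Matrix.kroneckerMap_apply,
    LinearMap.coe_mk, AddHom.coe_mk, Matrix.sub_apply, Matrix.smul_apply, Matrix.one_apply,
    Matrix.trace, Matrix.diag, Matrix.of_apply, smul_eq_mul, Matrix.single]
  rw [Finset.sum_comm]
  rw [Finset.sum_eq_single c]
  · rw [Finset.sum_eq_single a]
    · simp [mul_ite, mul_assoc]
    · intro i _ hi
      simp [hi]
    · simp
  · intro j _ hj
    simp [hj]
  · simp

lemma sum4_swap {κ ν : Type*} [Fintype κ] [Fintype ν] (f : κ → ν → κ → ν → ℂ) :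
    ∑ a, ∑ b, ∑ c, ∑ m, f a b c m = ∑ b, ∑ m, ∑ a, ∑ c, f a b c m :=
  calc ∑ a, ∑ b, ∑ c, ∑ m, f a b c m
      = ∑ b, ∑ a, ∑ c, ∑ m, f a b c m := Finset.sum_comm
    _ = ∑ b, ∑ a, ∑ m, ∑ c, f a b c m :=
        Finset.sum_congr rfl fun _ _ => Finset.sum_congr rfl fun _ _ => Finset.sum_comm
    _ = ∑ b, ∑ m, ∑ a, ∑ c, f a b c m :=
        Finset.sum_congr rfl fun _ _ => Finset.sum_comm

lemma sum3_swap {M κ ν₁ ν₂ : Type*} [AddCommMonoid M] [Fintype κ] [Fintype ν₁] [Fintype ν₂]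
    (f : ν₁ → ν₂ → κ → M) :
    ∑ b, ∑ m, ∑ α, f b m α = ∑ α, ∑ b, ∑ m, f b m α :=
  calc ∑ b, ∑ m, ∑ α, f b m α
      = ∑ b, ∑ α, ∑ m, f b m α := Finset.sum_congr rfl fun _ _ => Finset.sum_comm
    _ = ∑ α, ∑ b, ∑ m, f b m α := Finset.sum_comm

noncomputable def entvec (n : ℕ) : Fin n × Fin n → ℂ := fun p => if p.1 = p.2 then 1 else 0

noncomputable def entmat (n : ℕ) : Matrix (Fin n × Fin n) (Fin n × Fin n) ℂ :=
  Matrix.of fun p q => entvec n p * entvec n q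

lemma entmat_posSemidef {n : ℕ} (hn : 0 < n) : (entmat n).PosSemidef := by
  have hB : entmat n = (Matrix.of fun (r p : Fin n × Fin n) =>
      if r = (⟨0, hn⟩, ⟨0, hn⟩) then entvec n p else 0)ᴴ *
      (Matrix.of fun (r p : Fin n × Fin n) => if r = (⟨0, hn⟩, ⟨0, hn⟩) then entvec n p else 0) := by
    ext p q
    simp only [entmat, Matrix.mul_apply, Matrix.conjTranspose_apply, Matrix.of_apply,
      apply_ite (star : ℂ → ℂ), star_zero, ite_mul, zero_mul, mul_ite, mul_zero]
    rw [Finset.sum_ite_eq' Finset.univ ((⟨0, hn⟩, ⟨0, hn⟩) : Fin n × Fin n)]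
    simp [entvec, apply_ite (star : ℂ → ℂ), mul_comm]
  rw [hB]
  exact Matrix.posSemidef_conjTranspose_mul_self _

/-- `φ_λ` is completely positive iff `λ ≥ n`. -/
theorem stmt_18 {n : ℕ} (hn : 0 < n) (lam : ℝ) :
    (∀ (k : ℕ) (ρ : Matrix (Fin k × Fin n) (Fin k × Fin n) ℂ), ρ.PosSemidef →
      (tensorMap (LinearMap.id : Matrix (Fin k) (Fin k) ℂ →ₗ[ℂ] Matrix (Fin k) (Fin k) ℂ)
        (tomiyamaChoi n lam) ρ).PosSemidef) ↔
    (n : ℝ) ≤ lam := by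
  constructor
  · intro h
    have hM : ∀ (a c : Fin n) (b d : Fin n),
        tensorMap (LinearMap.id : Matrix (Fin n) (Fin n) ℂ →ₗ[ℂ] Matrix (Fin n) (Fin n) ℂ)
          (tomiyamaChoi n lam) (entmat n) (a, b) (c, d)
        = (lam : ℂ) * (∑ m, (entvec n (a, m) * entvec n (c, m))) * (if b = d then 1 else 0)
          - entvec n (a, b) * entvec n (c, d) := by
      intro a c b d
      rw [tm_entry]
      simp [entmat]
    have h0 := (h n (entmat n) (entmat_posSemidef hn)).dotProduct_mulVec_nonneg (entvec n)
    have hval : star (entvec n) ⬝ᵥ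
        ((tensorMap (LinearMap.id : Matrix (Fin n) (Fin n) ℂ →ₗ[ℂ] Matrix (Fin n) (Fin n) ℂ)
          (tomiyamaChoi n lam) (entmat n)) *ᵥ entvec n) = ((lam * n - n ^ 2 : ℝ) : ℂ) := by
      simp only [dotProduct, Matrix.mulVec, Fintype.sum_prod_type, Pi.star_apply, hM]
      simp only [entvec, apply_ite (star : ℂ → ℂ), star_one, star_zero]
      push_cast
      simp only [ite_mul, mul_ite, one_mul, mul_one, zero_mul, mul_zero, sub_mul, zero_sub,
        mul_comm]
      simp [Finset.sum_ite_eq, Finset.sum_ite_eq', Finset.sum_sub_distrib, Finset.mul_sum,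
        Finset.sum_comm (γ := Fin n), sq]
      ring
    rw [hval] at h0
    have h1 : (0 : ℝ) ≤ lam * n - n ^ 2 := Complex.zero_le_real.mp h0
    have hn' : (0 : ℝ) < n := by exact_mod_cast hn
    nlinarith
  · intro hle k ρ hρ
    obtain ⟨C, rfl⟩ : ∃ C : Matrix (Fin k × Fin n) (Fin k × Fin n) ℂ, ρ = Cᴴ * C := by
      open scoped MatrixOrder in exact CStarAlgebra.nonneg_iff_eq_star_mul_self.mp hρ.nonneg
    have hH : ∀ p q, star ((Cᴴ * C) q p) = (Cᴴ * C) p q := hρ.1.apply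
    refine Matrix.PosSemidef.of_dotProduct_mulVec_nonneg ?_ ?_
    · -- Hermitian
      ext ⟨a, b⟩ ⟨c, d⟩
      rw [Matrix.conjTranspose_apply, tm_entry, tm_entry]
      by_cases hbd : b = d
      · subst hbd
        simp [star_sub, star_mul', star_sum, hH, Complex.conj_ofReal, mul_comm]
      · rw [if_neg hbd, if_neg (fun h : d = b => hbd h.symm)]
        simp [hH]
    · intro x
      set s : (Fin k × Fin n) → Fin n → Fin n → ℂ :=
        fun α m b => ∑ c, C α (c, m) * x (c, b) with hs
      have step1 : star x ⬝ᵥ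
          ((tensorMap (LinearMap.id : Matrix (Fin k) (Fin k) ℂ →ₗ[ℂ] Matrix (Fin k) (Fin k) ℂ)
            (tomiyamaChoi n lam) (Cᴴ * C)) *ᵥ x)
          = (lam : ℂ) * (∑ b : Fin n, ∑ m : Fin n, ∑ a : Fin k, ∑ c : Fin k,
              (starRingEnd ℂ) (x (a, b)) * ((Cᴴ * C) (a, m) (c, m) * x (c, b)))
            - star x ⬝ᵥ ((Cᴴ * C) *ᵥ x) := by
        simp only [dotProduct, Matrix.mulVec, Pi.star_apply, Fintype.sum_prod_type,
          tm_entry, sub_mul, mul_sub, Finset.sum_sub_distrib, Finset.mul_sum, RCLike.star_def]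
        congr 1
        simp only [mul_ite, ite_mul, mul_zero, zero_mul, mul_one, Finset.sum_ite_eq,
          Finset.mem_univ, if_true, Finset.sum_mul, Finset.mul_sum]
        rw [sum4_swap (fun a b c m =>
          (starRingEnd ℂ) (x (a, b)) * ((lam : ℂ) * (Cᴴ * C) (a, m) (c, m) * x (c, b)))]
        refine Finset.sum_congr rfl fun b _ => Finset.sum_congr rfl fun m _ =>
          Finset.sum_congr rfl fun a _ => Finset.sum_congr rfl fun c _ => by ring
      have step2 : ∀ (b m : Fin n), (∑ a : Fin k, ∑ c : Fin k,
          (starRingEnd ℂ) (x (a, b)) * ((Cᴴ * C) (a, m) (c, m) * x (c, b)))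
          = ∑ α, ((Complex.normSq (s α m b) : ℂ)) := by
        intro b m
        have hα : ∀ α, ((Complex.normSq (s α m b) : ℂ))
            = (∑ a, (starRingEnd ℂ) (C α (a, m)) * (starRingEnd ℂ) (x (a, b)))
              * (∑ c, C α (c, m) * x (c, b)) := by
          intro α
          rw [Complex.normSq_eq_conj_mul_self, hs]
          simp [map_sum]
        simp only [hα, Finset.sum_mul, Finset.mul_sum, Matrix.mul_apply,
          Matrix.conjTranspose_apply, RCLike.star_def]
        rw [sum3_swap (fun a c α => (starRingEnd ℂ) (x (a, b))
          * (((starRingEnd ℂ) (C α (a, m)) * C α (c, m)) * x (c, b)))]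
        refine Finset.sum_congr rfl fun α _ => ?_
        rw [Finset.sum_comm]
        refine Finset.sum_congr rfl fun a _ => Finset.sum_congr rfl fun c _ => by ring
      have step3 : star x ⬝ᵥ ((Cᴴ * C) *ᵥ x)
          = ∑ α, ((Complex.normSq (∑ j, s α j j) : ℂ)) := by
        rw [← Matrix.mulVec_mulVec, dotProduct_mulVec, Matrix.vecMul_conjTranspose,
          star_star]
        have hCx : ∀ α, (C *ᵥ x) α = ∑ j, s α j j := by
          intro α
          simp only [Matrix.mulVec, dotProduct, Fintype.sum_prod_type, hs]
          exact Finset.sum_comm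
        simp [dotProduct, hCx, Complex.normSq_eq_conj_mul_self]
      rw [step1]
      simp only [step2, step3]
      have hcast : (lam : ℂ) * (∑ b : Fin n, ∑ m : Fin n, ∑ α, ((Complex.normSq (s α m b) : ℂ)))
            - ∑ α, ((Complex.normSq (∑ j, s α j j) : ℂ))
          = (((lam * ∑ b : Fin n, ∑ m : Fin n, ∑ α, Complex.normSq (s α m b))
            - ∑ α, Complex.normSq (∑ j, s α j j) : ℝ) : ℂ) := by
        push_cast
        ring
      rw [hcast]
      rw [Complex.zero_le_real, sub_nonneg]
      -- the real inequality
      have swap : (∑ b : Fin n, ∑ m : Fin n, ∑ α : Fin k × Fin n, Complex.normSq (s α m b))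
          = ∑ α : Fin k × Fin n, ∑ b, ∑ m, Complex.normSq (s α m b) := sum3_swap _
      rw [swap]
      have hper : ∀ α, Complex.normSq (∑ j, s α j j)
          ≤ (n : ℝ) * ∑ b, ∑ m, Complex.normSq (s α m b) := by
        intro α
        have h1 : Complex.normSq (∑ j, s α j j) ≤ (∑ j, ‖s α j j‖) ^ 2 := by
          rw [← Complex.sq_norm]
          exact pow_le_pow_left₀ (norm_nonneg _)
            (norm_sum_le Finset.univ (fun j => s α j j)) 2
        have h2 : (∑ j, ‖s α j j‖) ^ 2
            ≤ (n : ℝ) * ∑ j, ‖s α j j‖ ^ 2 := by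
          have := sq_sum_le_card_mul_sum_sq (s := (Finset.univ : Finset (Fin n)))
            (f := fun j => ‖s α j j‖)
          simpa using this
        have h3 : (∑ j, ‖s α j j‖ ^ 2)
            ≤ ∑ b, ∑ m, Complex.normSq (s α m b) := by
          refine Finset.sum_le_sum fun j _ => ?_
          rw [Complex.sq_norm]
          exact Finset.single_le_sum (f := fun m => Complex.normSq (s α m j))
            (fun i _ => Complex.normSq_nonneg _) (Finset.mem_univ j)
        calc Complex.normSq (∑ j, s α j j) ≤ (∑ j, ‖s α j j‖) ^ 2 := h1
          _ ≤ (n : ℝ) * ∑ j, ‖s α j j‖ ^ 2 := h2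
          _ ≤ (n : ℝ) * ∑ b, ∑ m, Complex.normSq (s α m b) :=
              mul_le_mul_of_nonneg_left h3 (Nat.cast_nonneg n)
      calc (∑ α : Fin k × Fin n, Complex.normSq (∑ j, s α j j))
          ≤ ∑ α : Fin k × Fin n, (n : ℝ) * ∑ b, ∑ m, Complex.normSq (s α m b) :=
            Finset.sum_le_sum fun α _ => hper α
        _ = (n : ℝ) * ∑ α, ∑ b, ∑ m, Complex.normSq (s α m b) := by rw [Finset.mul_sum]
        _ ≤ lam * ∑ α, ∑ b, ∑ m, Complex.normSq (s α m b) :=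
            mul_le_mul_of_nonneg_right hle
              (Finset.sum_nonneg fun α _ => Finset.sum_nonneg fun b _ =>
                Finset.sum_nonneg fun m _ => Complex.normSq_nonneg _)
end
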